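/- (Rank-0 base case) Let X be a finite set of clauses and Y* a finite set of clauses (the complements of the members of a DNF set Y), such that there is no literal l with l and l* occurring in distinct clauses of X ∪ Y*. If ⋀X → ⋁Y is valid, then the empty clause belongs to X ∪ Y*; consequently either ⊥ is an interpolant (when ⊥ ∈ X) or ⊤ is an interpolant (when ⊥ ∈ Y*). -/
import Mathlib


/-- Propositional formulas over variables indexed by naturals. -/
inductive PropForm where
  | var : Nat → PropForm
  | fls : PropForm
  | tru : PropForm
  | neg : PropForm → PropForm
  | conj : PropForm → PropForm → PropForm
  | disj : PropForm → PropForm → PropForm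
deriving DecidableEq

/-- Classical Boolean evaluation of a formula under a valuation. -/
def PropForm.eval (v : Nat → Bool) : PropForm → Bool
  | .var n => v n
  | .fls => false
  | .tru => true
  | .neg A => !(A.eval v)
  | .conj A B => A.eval v && B.eval v
  | .disj A B => A.eval v || B.eval v

/-- The propositional variables occurring in a formula. -/
def PropForm.vars : PropForm → Finset Nat
  | .var n => {n}
  | .fls => ∅
  | .tru => ∅
  | .neg A => A.vars
  | .conj A B => A.vars ∪ B.vars
  | .disj A B => A.vars ∪ B.vars

/-- A formula is valid iff true under every valuation. -/
def PropForm.Valid (A : PropForm) : Prop := ∀ v : Nat → Bool, A.eval v = true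

/-- Literals: a variable or its negation. -/
inductive Lit where
  | pos : Nat → Lit
  | neg : Nat → Lit
deriving DecidableEq

/-- The complement of a literal. -/
def Lit.compl : Lit → Lit
  | .pos n => .neg n
  | .neg n => .pos n

/-- The variable of a literal. -/
def Lit.var : Lit → Nat
  | .pos n => n
  | .neg n => n

/-- Evaluation of a literal. -/
def Lit.eval (v : Nat → Bool) : Lit → Bool
  | .pos n => v n
  | .neg n => !(v n)

/-- A literal as a formula. -/
def Lit.toForm : Lit → PropForm
  | .pos n => .var n
  | .neg n => .neg (.var n)

/-- A clause (finite set of literals read disjunctively) is satisfied by `v`. -/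
def clauseSat (v : Nat → Bool) (C : Finset Lit) : Prop := ∃ l ∈ C, l.eval v = true

/-- A conjunction of literals (finite set read conjunctively) is satisfied by `v`. -/
def cubeSat (v : Nat → Bool) (C : Finset Lit) : Prop := ∀ l ∈ C, l.eval v = true

theorem stmt8 (X Y : Finset (Finset Lit))
    (hrank0 : ¬ ∃ l : Lit, ∃ C₁ ∈ X ∪ Y.image (fun D => D.image Lit.compl),
      ∃ C₂ ∈ X ∪ Y.image (fun D => D.image Lit.compl),
        C₁ ≠ C₂ ∧ l ∈ C₁ ∧ l.compl ∈ C₂)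
    (hvalid : ∀ v : Nat → Bool, (∀ C ∈ X, clauseSat v C) → ∃ D ∈ Y, cubeSat v D) :
    (∅ : Finset Lit) ∈ X ∪ Y.image (fun D => D.image Lit.compl) ∧
    ((∅ : Finset Lit) ∈ X →
      (∀ v : Nat → Bool, (∀ C ∈ X, clauseSat v C) → (PropForm.fls.eval v = true)) ∧
      (∀ v : Nat → Bool, PropForm.fls.eval v = true → ∃ D ∈ Y, cubeSat v D)) ∧
    ((∅ : Finset Lit) ∈ Y.image (fun D => D.image Lit.compl) →
      (∀ v : Nat → Bool, (∀ C ∈ X, clauseSat v C) → (PropForm.tru.eval v = true)) ∧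
      (∀ v : Nat → Bool, PropForm.tru.eval v = true → ∃ D ∈ Y, cubeSat v D)) := by
  classical
  have hmain : (∅ : Finset Lit) ∈ X ∪ Y.image (fun D => D.image Lit.compl) := by
    by_contra hempty
    set v : Nat → Bool :=
      fun n => decide (∃ C ∈ X ∪ Y.image (fun D => D.image Lit.compl), Lit.pos n ∈ C) with hv
    have hsat : ∀ C ∈ X ∪ Y.image (fun D => D.image Lit.compl), clauseSat v C := by
      intro C hC
      have hne : C.Nonempty := by
        rcases Finset.eq_empty_or_nonempty C with rfl | h
        · exact absurd hC hempty
        · exact h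
      obtain ⟨l, hl⟩ := hne
      cases l with
      | pos n =>
          refine ⟨.pos n, hl, ?_⟩
          simp only [Lit.eval, hv, decide_eq_true_eq]
          exact ⟨C, hC, hl⟩
      | neg n =>
          by_cases h : ∃ C' ∈ X ∪ Y.image (fun D => D.image Lit.compl), Lit.pos n ∈ C'
          · obtain ⟨C', hC', hpos⟩ := h
            by_cases hCC : C' = C
            · refine ⟨.pos n, hCC ▸ hpos, ?_⟩
              simp only [Lit.eval, hv, decide_eq_true_eq]
              exact ⟨C', hC', hpos⟩
            · exact absurd ⟨Lit.pos n, C', hC', C, hC, hCC, hpos, hl⟩ hrank0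
          · refine ⟨.neg n, hl, ?_⟩
            simp only [Lit.eval, hv]
            simpa using h
    have hX : ∀ C ∈ X, clauseSat v C := fun C hC => hsat C (Finset.mem_union_left _ hC)
    obtain ⟨D, hD, hcube⟩ := hvalid v hX
    obtain ⟨l, hl, hle⟩ := hsat (D.image Lit.compl)
      (Finset.mem_union_right _ (Finset.mem_image.mpr ⟨D, hD, rfl⟩))
    obtain ⟨m, hm, rfl⟩ := Finset.mem_image.mp hl
    have hme := hcube m hm
    cases m <;> simp [Lit.eval, Lit.compl] at hme hle <;> simp [hme] at hle
  refine ⟨hmain, ?_, ?_⟩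
  · intro hX0
    constructor
    · intro v hall
      obtain ⟨l, hl, _⟩ := hall ∅ hX0
      exact absurd hl (Finset.notMem_empty l)
    · intro v hfls
      simp [PropForm.eval] at hfls
  · intro hY0
    constructor
    · intro v _; rfl
    · intro v _
      obtain ⟨D, hD, hDe⟩ := Finset.mem_image.mp hY0
      have : D = ∅ := Finset.image_eq_empty.mp hDe
      exact ⟨D, hD, by simp [this, cubeSat]⟩
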